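/- arXiv:0810.4705 — 6 statements merged into one kernel-verified Lean document; each statement's English description precedes it below -/
import Mathlib

section
/- If an ordered set A is iteratively algebraic, then every element of A is compact, i.e. A = K(A). -/
universe u

/-- A subset is directed if every finite subset has an upper bound in it. -/
def IsDirectedSet {α : Type u} [PartialOrder α] (X : Set α) : Prop :=
  ∀ F : Finset α, ↑F ⊆ X → ∃ z ∈ X, ∀ x ∈ F, x ≤ z

/-- An element is compact if whenever it is below the supremum of a directed set,
it is below some member of the set. -/
def IsCompactElem {α : Type u} [PartialOrder α] (k : α) : Prop :=
  ∀ X : Set α, IsDirectedSet X → ∀ s : α, IsLUB X s → k ≤ s → ∃ x ∈ X, k ≤ x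

/-- An ordered set is upwards complete if every directed subset has a supremum. -/
def UpwardsComplete (α : Type u) [PartialOrder α] : Prop :=
  ∀ X : Set α, IsDirectedSet X → ∃ s : α, IsLUB X s

/-- An ordered set is algebraic if it is upwards complete and every element is the
supremum of the directed set of compact elements below it. -/
def IsAlgebraicOrder (α : Type u) [PartialOrder α] : Prop :=
  UpwardsComplete α ∧ ∀ x : α,
    IsDirectedSet {k : α | IsCompactElem k ∧ k ≤ x} ∧
    IsLUB {k : α | IsCompactElem k ∧ k ≤ x} x

/-- The iterated poset of compact elements: `KIter α inst n` is `Kⁿ(α)` with its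
induced partial order. -/
def KIter (α : Type u) (inst : PartialOrder α) : ℕ → (β : Type u) × PartialOrder β
  | 0 => ⟨α, inst⟩
  | n + 1 =>
    let p := KIter α inst n
    ⟨{x : p.1 // @IsCompactElem p.1 p.2 x}, @Subtype.partialOrder p.1 p.2 _⟩

/-- An ordered set is iteratively algebraic if `Kⁿ(α)` is algebraic for all `n`. -/
def IterativelyAlgebraic (α : Type u) (inst : PartialOrder α) : Prop :=
  ∀ n : ℕ, @IsAlgebraicOrder (KIter α inst n).1 (KIter α inst n).2

/- ----------------  auxiliary material  ---------------- -/

section IterAux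

/-- Nonempty chains are directed sets. -/
theorem IA.isChain_isDirectedSet {β : Type u} [PartialOrder β] {X : Set β}
    (hc : IsChain (· ≤ ·) X) (hne : X.Nonempty) : IsDirectedSet X := by
  intro F
  classical
  induction F using Finset.induction_on with
  | empty =>
    intro _
    obtain ⟨z, hz⟩ := hne
    exact ⟨z, hz, by simp⟩
  | @insert a F ha ih =>
    intro hF
    have haX : a ∈ X := hF (Finset.mem_insert_self a F)
    obtain ⟨z, hzX, hz⟩ := ih (fun y hy => hF (Finset.mem_insert_of_mem hy))
    rcases hc.total haX hzX with h1 | h1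
    · refine ⟨z, hzX, ?_⟩
      intro y hy
      rcases Finset.mem_insert.1 hy with rfl | hy
      · exact h1
      · exact hz y hy
    · refine ⟨a, haX, ?_⟩
      intro y hy
      rcases Finset.mem_insert.1 hy with rfl | hy
      · exact le_rfl
      · exact (hz y hy).trans h1

variable (α : Type u) (inst : PartialOrder α)

/-- The canonical partial order on each iterated poset of compacts. -/
instance IA.KOrd (n : ℕ) : PartialOrder (KIter α inst n).1 := (KIter α inst n).2

/-- The underlying element of `α` of an element of `Kⁿ(α)`. -/
def IA.kval : (n : ℕ) → (KIter α inst n).1 → α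
  | 0, x => x
  | n + 1, x => IA.kval n x.1

theorem IA.kval_succ (n : ℕ) (x : (KIter α inst (n + 1)).1) :
    IA.kval α inst (n + 1) x = IA.kval α inst n x.1 := rfl

theorem IA.kval_le_iff : ∀ (n : ℕ) (a b : (KIter α inst n).1),
    a ≤ b ↔ IA.kval α inst n a ≤ IA.kval α inst n b
  | 0, a, b => Iff.rfl
  | n + 1, a, b => by
    have h1 : a ≤ b ↔ a.1 ≤ b.1 := Iff.rfl
    exact h1.trans (IA.kval_le_iff n a.1 b.1)

theorem IA.kval_compact : ∀ (n : ℕ) (s : (KIter α inst (n + 1)).1),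
    IsCompactElem (IA.kval α inst (n + 1) s)
  | 0, s => s.2
  | n + 1, s => IA.kval_compact n s.1

end IterAux

section IterMain

/-- Directedness of the compacts below `s` lifts to the subtype of compact elements. -/
theorem IA.sub_directed {β : Type u} [PartialOrder β] {s : β}
    (hd : IsDirectedSet {k : β | IsCompactElem k ∧ k ≤ s}) :
    IsDirectedSet {k : {y : β // IsCompactElem y} | k.1 ≤ s} := by
  intro F hF
  classical
  have hsub : ↑(F.image Subtype.val) ⊆ {k : β | IsCompactElem k ∧ k ≤ s} := by
    intro y hy
    obtain ⟨k, hk, rfl⟩ := Finset.mem_image.1 (Finset.mem_coe.1 hy)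
    exact ⟨k.2, hF hk⟩
  obtain ⟨z, hz, hub⟩ := hd (F.image Subtype.val) hsub
  refine ⟨⟨z, hz.1⟩, hz.2, ?_⟩
  intro k hk
  exact show k.1 ≤ z from hub k.1 (Finset.mem_image_of_mem _ hk)

/-- The key tower construction: `s` is the level-`(n+1)` supremum of the compact
elements (at that level) whose underlying value lies below `x`. -/
theorem IA.tower {α : Type u} {inst : PartialOrder α}
    (h : IterativelyAlgebraic α inst) (x : α) :
    ∀ n : ℕ, ∃ s : (KIter α inst (n + 1)).1,
      x ≤ IA.kval α inst (n + 1) s ∧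
      (∀ k : (KIter α inst (n + 1)).1, IsCompactElem k →
        (k ≤ s ↔ IA.kval α inst (n + 1) k ≤ x)) ∧
      IsLUB {k : (KIter α inst (n + 1)).1 | IA.kval α inst (n + 1) k ≤ x} s := by
  intro n
  induction n with
  | zero =>
    have h0 := (h 0).2 x
    have hd1 : IsDirectedSet {k : (KIter α inst 1).1 | IA.kval α inst 1 k ≤ x} :=
      IA.sub_directed (β := α) h0.1
    obtain ⟨s, hs⟩ := (h 1).1 _ hd1
    refine ⟨s, ?_, ?_, hs⟩
    · refine h0.2.2 ?_
      intro k hk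
      have : (⟨k, hk.1⟩ : (KIter α inst 1).1) ≤ s := hs.1 (show IA.kval α inst 1 ⟨k, hk.1⟩ ≤ x from hk.2)
      exact this
    · intro k hkc
      constructor
      · intro hks
        obtain ⟨j, hj, hkj⟩ := hkc _ hd1 s hs hks
        exact ((IA.kval_le_iff α inst 1 k j).1 hkj).trans hj
      · intro hkx
        exact hs.1 hkx
  | succ n ih =>
    obtain ⟨s, hA, hB, hC⟩ := ih
    have hY := (h (n + 1)).2 s
    have hset : {k : (KIter α inst (n + 2)).1 | IA.kval α inst (n + 2) k ≤ x}
        = {k : (KIter α inst (n + 2)).1 | k.1 ≤ s} := by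
      ext k
      exact (hB k.1 k.2).symm
    have hd' : IsDirectedSet {k : (KIter α inst (n + 2)).1 | IA.kval α inst (n + 2) k ≤ x} := by
      rw [hset]
      exact IA.sub_directed hY.1
    obtain ⟨s', hs'⟩ := (h (n + 2)).1 _ hd'
    have hsub : s ≤ s'.1 := by
      refine hY.2.2 ?_
      intro k hk
      have : (⟨k, hk.1⟩ : (KIter α inst (n + 2)).1) ≤ s' :=
        hs'.1 (show IA.kval α inst (n + 1) k ≤ x from (hB k hk.1).1 hk.2)
      exact this
    refine ⟨s', ?_, ?_, hs'⟩
    · exact hA.trans ((IA.kval_le_iff α inst (n + 1) s s'.1).1 hsub)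
    · intro k hkc
      constructor
      · intro hks
        obtain ⟨j, hj, hkj⟩ := hkc _ hd' s' hs' hks
        exact ((IA.kval_le_iff α inst (n + 2) k j).1 hkj).trans hj
      · intro hkx
        exact hs'.1 hkx

/-- Above every non-compact element there is a strictly bigger non-compact element. -/
theorem IA.exists_gt {α : Type u} {inst : PartialOrder α}
    (h : IterativelyAlgebraic α inst) (x : α) (hx : ¬ IsCompactElem x) :
    ∃ w : α, ¬ IsCompactElem w ∧ x ≤ w ∧ ¬ w ≤ x := by
  choose g hg using IA.tower h x
  set a : ℕ → α := fun n => IA.kval α inst (n + 1) (g n) with ha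
  have hA : ∀ n, x ≤ a n := fun n => (hg n).1
  have hB := fun n => (hg n).2.1
  have hC := fun n => (hg n).2.2
  have hlink : ∀ n, a n ≤ a (n + 1) := by
    intro n
    have hY := (h (n + 1)).2 (g n)
    have hsub : g n ≤ (g (n + 1)).1 := by
      refine hY.2.2 ?_
      intro k hk
      have : (⟨k, hk.1⟩ : (KIter α inst (n + 2)).1) ≤ g (n + 1) :=
        (hC (n + 1)).1 (show IA.kval α inst (n + 1) k ≤ x from (hB n k hk.1).1 hk.2)
      exact this
    exact (IA.kval_le_iff α inst (n + 1) (g n) (g (n + 1)).1).1 hsub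
  have hmono : ∀ m n, m ≤ n → a m ≤ a n := by
    intro m n hmn
    induction hmn with
    | refl => exact le_rfl
    | step h' ih => exact ih.trans (hlink _)
  have hcol : ∀ n, a (n + 1) ≤ a n → IsCompactElem x := by
    intro n hle
    have hsub : (g (n + 1)).1 ≤ g n := (IA.kval_le_iff α inst (n + 1) _ _).2 hle
    have h1 : IA.kval α inst (n + 1) (g (n + 1)).1 ≤ x := (hB n (g (n + 1)).1 (g (n + 1)).2).1 hsub
    have h2 : x = a (n + 1) := le_antisymm (hA (n + 1)) h1
    have h3 : IsCompactElem (a (n + 1)) := IA.kval_compact α inst (n + 1) (g (n + 1))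
    rwa [← h2] at h3
  have hchain : IsChain (· ≤ ·) (Set.range a) := by
    rintro _ ⟨m, rfl⟩ _ ⟨n, rfl⟩ _
    rcases le_total m n with hmn | hnm
    · exact Or.inl (hmono m n hmn)
    · exact Or.inr (hmono n m hnm)
  have hdir : IsDirectedSet (Set.range a) :=
    IA.isChain_isDirectedSet hchain ⟨a 0, 0, rfl⟩
  obtain ⟨w, hw⟩ := (h 0).1 _ hdir
  have hwn : ¬ IsCompactElem w := by
    intro hwc
    obtain ⟨r, ⟨n, rfl⟩, hwr⟩ := hwc _ hdir w hw le_rfl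
    exact hx (hcol n ((hw.1 ⟨n + 1, rfl⟩).trans hwr))
  refine ⟨w, hwn, (hA 0).trans (hw.1 ⟨0, rfl⟩), ?_⟩
  intro hwx
  exact hx (hcol 0 ((hw.1 ⟨1, rfl⟩).trans (hwx.trans (hA 0))))

end IterMain

/-- If an ordered set is iteratively algebraic, every element is compact. -/
theorem iterativelyAlgebraic_all_compact {α : Type u} [inst : PartialOrder α]
    (h : IterativelyAlgebraic α inst) : ∀ a : α, IsCompactElem a := by
  intro a
  by_contra ha
  have hbnd : ∀ c ⊆ {y : α | ¬ IsCompactElem y}, IsChain (· ≤ ·) c →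
      ∀ y ∈ c, ∃ ub ∈ {y : α | ¬ IsCompactElem y}, ∀ z ∈ c, z ≤ ub := by
    intro c hcs hchain y hy
    obtain ⟨w, hw⟩ := (h 0).1 c (IA.isChain_isDirectedSet hchain ⟨y, hy⟩)
    refine ⟨w, ?_, fun z hz => hw.1 hz⟩
    intro hwc
    obtain ⟨z, hz, hwz⟩ := hwc c (IA.isChain_isDirectedSet hchain ⟨y, hy⟩) w hw le_rfl
    exact (hcs hz) (le_antisymm hwz (hw.1 hz) ▸ hwc)
  obtain ⟨m, -, hm⟩ := zorn_le_nonempty₀ {y : α | ¬ IsCompactElem y} hbnd a ha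
  obtain ⟨w, hwn, hmw, hnwm⟩ := IA.exists_gt h m hm.1
  exact hnwm (hm.2 hwn hmw)
end

section
/- If an ordered set A is iteratively algebraic, then A satisfies the ascending chain condition: there is no strictly increasing sequence x₀ < x₁ < x₂ < … in A. -/
universe u

namespace IterAlgAux

/-- A nonempty chain is a directed set. -/
lemma chain_isDirected {γ : Type u} [PartialOrder γ] {M : Set γ} (hne : M.Nonempty)
    (hch : IsChain (· ≤ ·) M) : IsDirectedSet M := by
  classical
  intro F
  induction F using Finset.induction_on with
  | empty =>
      intro _
      exact ⟨hne.choose, hne.choose_spec, fun x hx => absurd hx (by simp)⟩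
  | @insert a F ha ih =>
      intro hF
      have haM : a ∈ M := hF (Finset.mem_insert_self a F)
      obtain ⟨z, hzM, hz⟩ := ih (fun x hx => hF (Finset.mem_insert_of_mem hx))
      rcases eq_or_ne a z with heq | hne'
      · subst heq
        refine ⟨a, hzM, fun x hx => ?_⟩
        rcases Finset.mem_insert.1 hx with rfl | hx
        · exact le_rfl
        · exact hz x hx
      · rcases hch haM hzM hne' with h1 | h2
        · refine ⟨z, hzM, fun x hx => ?_⟩
          rcases Finset.mem_insert.1 hx with rfl | hx
          · exact h1
          · exact hz x hx
        · refine ⟨a, haM, fun x hx => ?_⟩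
          rcases Finset.mem_insert.1 hx with rfl | hx
          · exact le_rfl
          · exact (hz x hx).trans h2

/-- The key step lemma: if `a` is the sup of a directed set `D` no member of which
dominates `a`, then the sup `b` (in `K(γ)`) of the compact elements below `a`
is strictly above `a` and enjoys the same property one level up. -/
lemma step_lemma {γ : Type u} [PartialOrder γ] (hAlg : IsAlgebraicOrder γ)
    (hUC : UpwardsComplete {x : γ // IsCompactElem x})
    (a : γ) (D : Set γ) (hdir : IsDirectedSet D) (hlub : IsLUB D a)
    (hnm : ∀ d ∈ D, ¬ a ≤ d) :
    ∃ (b : {x : γ // IsCompactElem x}) (E : Set {x : γ // IsCompactElem x}),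
      a ≤ b.1 ∧ a ≠ b.1 ∧ IsDirectedSet E ∧ IsLUB E b ∧ ∀ e ∈ E, ¬ b ≤ e := by
  classical
  obtain ⟨hGdir, hGlub⟩ := hAlg.2 a
  set E : Set {x : γ // IsCompactElem x} := {e | e.1 ≤ a} with hEdef
  have hEdir : IsDirectedSet E := by
    intro F hF
    obtain ⟨z, hzG, hz⟩ := hGdir (F.image Subtype.val) (by
      intro k hk
      simp only [Finset.coe_image] at hk
      obtain ⟨e, he, rfl⟩ := hk
      exact ⟨e.2, hF he⟩)
    exact ⟨⟨z, hzG.1⟩, hzG.2, fun x hx =>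
      hz x.1 (Finset.mem_image_of_mem _ hx)⟩
  obtain ⟨b, hb⟩ := hUC E hEdir
  have hbub : b.1 ∈ upperBounds {k : γ | IsCompactElem k ∧ k ≤ a} := by
    intro k hk
    exact hb.1 (show (⟨k, hk.1⟩ : {x : γ // IsCompactElem x}) ∈ E from hk.2)
  have hub : a ≤ b.1 := hGlub.2 hbub
  have hane : a ≠ b.1 := by
    intro he
    have hcomp : IsCompactElem a := by rw [he]; exact b.2
    obtain ⟨d, hd, had⟩ := hcomp D hdir a hlub le_rfl
    exact hnm d hd had
  refine ⟨b, E, hub, hane, hEdir, hb, ?_⟩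
  intro e heE hle
  have h1 : b.1 ≤ a := le_trans (show b.1 ≤ e.1 from hle) heE
  exact hane (le_antisymm hub h1)

/-- The canonical embedding of `Kⁿ(α)` into `α`. -/
def emb (α : Type u) (inst : PartialOrder α) : (n : ℕ) → (KIter α inst n).1 → α
  | 0, x => x
  | n + 1, x => emb α inst n x.1

lemma emb_mono (α : Type u) (inst : PartialOrder α) :
    ∀ (n : ℕ) (x y : (KIter α inst n).1),
      @LE.le _ ((KIter α inst n).2.toPreorder.toLE) x y →
      emb α inst n x ≤ emb α inst n y
  | 0, _, _, h => h
  | n + 1, x, y, h => emb_mono α inst n x.1 y.1 h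

lemma emb_inj (α : Type u) (inst : PartialOrder α) :
    ∀ (n : ℕ) (x y : (KIter α inst n).1), emb α inst n x = emb α inst n y → x = y
  | 0, _, _, h => h
  | n + 1, x, y, h => Subtype.ext (emb_inj α inst n x.1 y.1 h)

/-- `a` is the image of an element of `Kⁿ(α)` which is the sup of a directed set
no member of which dominates it. -/
def Good (α : Type u) (inst : PartialOrder α) (n : ℕ) (a : α) : Prop :=
  ∃ (b : (KIter α inst n).1) (D : Set (KIter α inst n).1),
    emb α inst n b = a ∧
    @IsDirectedSet _ (KIter α inst n).2 D ∧
    @IsLUB _ ((KIter α inst n).2.toPreorder.toLE) D b ∧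
    ∀ d ∈ D, ¬ @LE.le _ ((KIter α inst n).2.toPreorder.toLE) b d

lemma good_step (α : Type u) (inst : PartialOrder α)
    (h : IterativelyAlgebraic α inst) (n : ℕ) (a : α)
    (hg : Good α inst n a) : ∃ a', a < a' ∧ Good α inst (n + 1) a' := by
  obtain ⟨b, D, rfl, hdir, hlub, hnm⟩ := hg
  letI : PartialOrder (KIter α inst n).1 := (KIter α inst n).2
  have hAlg : IsAlgebraicOrder (KIter α inst n).1 := h n
  have hUC : UpwardsComplete {x : (KIter α inst n).1 // IsCompactElem x} := (h (n + 1)).1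
  obtain ⟨b', E, h1, h2, h3, h4, h5⟩ := step_lemma hAlg hUC b D hdir hlub hnm
  refine ⟨emb α inst n b'.1, ?_, ?_⟩
  · exact lt_of_le_of_ne (emb_mono α inst n b b'.1 h1)
      (fun he => h2 (emb_inj α inst n b b'.1 he))
  · exact ⟨b', E, rfl, h3, h4, h5⟩

end IterAlgAux

/-- An iteratively algebraic ordered set satisfies the ascending chain condition. -/
theorem iterativelyAlgebraic_acc {α : Type u} [inst : PartialOrder α]
    (h : IterativelyAlgebraic α inst) :
    ¬ ∃ x : ℕ → α, ∀ n : ℕ, x n < x (n + 1) := by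
  classical
  rintro ⟨x, hx⟩
  have hsm : StrictMono x := strictMono_nat_of_lt_succ hx
  -- the collection of nonempty chains without a maximum
  set S : Set (Set α) :=
    {C | C.Nonempty ∧ IsChain (· ≤ ·) C ∧ ∀ u ∈ C, ∃ w ∈ C, u < w} with hSdef
  have hrange : Set.range x ∈ S := by
    refine ⟨⟨x 0, ⟨0, rfl⟩⟩, ?_, ?_⟩
    · rintro a ⟨i, rfl⟩ b ⟨j, rfl⟩ _
      rcases le_total i j with hij | hij
      · exact Or.inl (hsm.monotone hij)
      · exact Or.inr (hsm.monotone hij)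
    · rintro u ⟨n, rfl⟩
      exact ⟨x (n + 1), ⟨n + 1, rfl⟩, hx n⟩
  -- Zorn: a maximal nonempty chain without maximum
  obtain ⟨M, hxM, hMmax⟩ := zorn_subset_nonempty S (fun c hcS hcch hcne => by
    refine ⟨⋃₀ c, ⟨?_, ?_, ?_⟩, fun s hs => Set.subset_sUnion_of_mem hs⟩
    · obtain ⟨C, hC⟩ := hcne
      obtain ⟨u, hu⟩ := (hcS hC).1
      exact ⟨u, C, hC, hu⟩
    · rintro a ⟨C1, hC1, ha⟩ b ⟨C2, hC2, hb⟩ hab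
      rcases eq_or_ne C1 C2 with rfl | hC12
      · exact (hcS hC1).2.1 ha hb hab
      · rcases hcch hC1 hC2 hC12 with hsub | hsub
        · exact (hcS hC2).2.1 (hsub ha) hb hab
        · exact (hcS hC1).2.1 ha (hsub hb) hab
    · rintro u ⟨C, hC, hu⟩
      obtain ⟨w, hw, hlt⟩ := (hcS hC).2.2 u hu
      exact ⟨w, ⟨C, hC, hw⟩, hlt⟩) (Set.range x) hrange
  obtain ⟨hMne, hMch, hMnomax⟩ := hMmax.prop
  have hMdir : IsDirectedSet M := IterAlgAux.chain_isDirected hMne hMch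
  -- the sup of the maximal chain
  have hUC0 : UpwardsComplete α := (h 0).1
  obtain ⟨m0, hm0⟩ := hUC0 M hMdir
  have hm0nm : ∀ d ∈ M, ¬ m0 ≤ d := by
    intro d hd hle
    obtain ⟨w, hw, hlt⟩ := hMnomax d hd
    exact absurd (le_trans (hm0.1 hw) hle) hlt.not_ge
  have hgood0 : IterAlgAux.Good α inst 0 m0 := ⟨m0, M, rfl, hMdir, hm0, hm0nm⟩
  -- iterate the step lemma to climb strictly above m0 forever
  have hstep := IterAlgAux.good_step α inst h
  let f : (n : ℕ) → {a : α // IterAlgAux.Good α inst n a} := fun n =>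
    Nat.rec ⟨m0, hgood0⟩
      (fun k p => ⟨(hstep k p.1 p.2).choose, (hstep k p.1 p.2).choose_spec.2⟩) n
  have hflt : ∀ n, (f n).1 < (f (n + 1)).1 := fun n =>
    (hstep n (f n).1 (f n).2).choose_spec.1
  set y : ℕ → α := fun n => (f n).1 with hydef
  have hy0 : y 0 = m0 := rfl
  have hysm : StrictMono y := strictMono_nat_of_lt_succ hflt
  have hym0 : ∀ k, m0 ≤ y k := fun k => hy0 ▸ hysm.monotone (Nat.zero_le k)
  -- m0 is not in M
  have hm0M : m0 ∉ M := by
    intro hmem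
    obtain ⟨w, hw, hlt⟩ := hMnomax m0 hmem
    exact absurd (hm0.1 hw) hlt.not_ge
  -- M ∪ range y is a strictly larger element of S
  have hN : M ∪ Set.range y ∈ S := by
    refine ⟨⟨hMne.choose, Or.inl hMne.choose_spec⟩, ?_, ?_⟩
    · rintro a (ha | ⟨i, rfl⟩) b (hb | ⟨j, rfl⟩) hab
      · exact hMch ha hb hab
      · exact Or.inl (le_trans (hm0.1 ha) (hym0 j))
      · exact Or.inr (le_trans (hm0.1 hb) (hym0 i))
      · rcases le_total i j with hij | hij
        · exact Or.inl (hysm.monotone hij)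
        · exact Or.inr (hysm.monotone hij)
    · rintro u (hu | ⟨k, rfl⟩)
      · obtain ⟨w, hw, hlt⟩ := hMnomax u hu
        exact ⟨w, Or.inl hw, hlt⟩
      · exact ⟨y (k + 1), Or.inr ⟨k + 1, rfl⟩, hflt k⟩
  have hsub : M ∪ Set.range y ⊆ M := hMmax.2 hN Set.subset_union_left
  exact hm0M (hsub (Or.inr ⟨0, rfl⟩))
end

section
/- If a lattice L is isomorphic (as an ordered set) to its ideal lattice Idl(L), then every ideal of L is principal. -/
universe u


/-- An ideal of a lattice: a nonempty, downward-closed subset closed under binary joins. -/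
structure LatticeIdeal (L : Type u) [Lattice L] where
  carrier : Set L
  nonempty' : carrier.Nonempty
  mem_of_le : ∀ ⦃x y : L⦄, y ≤ x → x ∈ carrier → y ∈ carrier
  sup_mem : ∀ ⦃x y : L⦄, x ∈ carrier → y ∈ carrier → x ⊔ y ∈ carrier

/-- Ideals are ordered by inclusion. -/
instance {L : Type u} [Lattice L] : PartialOrder (LatticeIdeal L) where
  le I J := I.carrier ⊆ J.carrier
  le_refl I := subset_rfl
  le_trans I J K h h' := Set.Subset.trans h h'
  le_antisymm I J h h' := by
    cases I; cases J
    simp only [LatticeIdeal.mk.injEq]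
    exact Set.Subset.antisymm h h'

namespace HiggsAux

variable {L : Type u} [Lattice L]

theorem le_def {I J : LatticeIdeal L} : I ≤ J ↔ I.carrier ⊆ J.carrier := Iff.rfl

theorem ideal_ext {I J : LatticeIdeal L} (h : I.carrier = J.carrier) : I = J :=
  le_antisymm (le_def.mpr h.subset) (le_def.mpr h.superset)

/-- The principal ideal generated by `x`. -/
def princ (x : L) : LatticeIdeal L where
  carrier := {y : L | y ≤ x}
  nonempty' := ⟨x, le_refl x⟩
  mem_of_le := fun _ _ h hx => le_trans h hx
  sup_mem := fun _ _ ha hb => sup_le ha hb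

theorem mem_princ {x y : L} : y ∈ (princ x).carrier ↔ y ≤ x := Iff.rfl

theorem princ_le_iff {x : L} {I : LatticeIdeal L} : princ x ≤ I ↔ x ∈ I.carrier := by
  constructor
  · intro h; exact h (le_refl x)
  · intro hx y hy; exact I.mem_of_le hy hx

theorem princ_le_princ_iff {x y : L} : princ x ≤ princ y ↔ x ≤ y := by
  rw [princ_le_iff]; exact Iff.rfl

/-- An ideal is principal if it is of the form `princ x`. -/
def IsPrinc (I : LatticeIdeal L) : Prop := ∃ x : L, I = princ x

section

variable (e : L ≃o LatticeIdeal L)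

/-- `phi e x` is the element corresponding to the principal ideal of `x`. -/
def phi (x : L) : L := e.symm (princ x)

theorem e_phi (x : L) : e (phi e x) = princ x := e.apply_symm_apply _

theorem mem_iff_phi_le {z x : L} : z ∈ (e x).carrier ↔ phi e z ≤ x := by
  constructor
  · intro h
    rw [← e.le_iff_le, e_phi]
    exact princ_le_iff.mpr h
  · intro h
    have h2 : e (phi e z) ≤ e x := e.le_iff_le.mpr h
    rw [e_phi] at h2
    exact princ_le_iff.mp h2

theorem phi_le_phi_iff {a b : L} : phi e a ≤ phi e b ↔ a ≤ b := by
  rw [phi, phi, e.symm.le_iff_le]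
  exact princ_le_princ_iff

theorem phi_strictMono : StrictMono (phi e) := by
  intro a b hab
  exact lt_of_le_of_ne ((phi_le_phi_iff e).mpr hab.le)
    (fun h => absurd ((phi_le_phi_iff e).mp h.ge) hab.not_ge)

/-- The ideal which is the join of all `e z`, `z ∈ e x`; its carrier is the union. -/
def bigU (x : L) : LatticeIdeal L where
  carrier := {y : L | ∃ z ∈ (e x).carrier, y ∈ (e z).carrier}
  nonempty' := by
    obtain ⟨z, hz⟩ := (e x).nonempty'
    obtain ⟨y, hy⟩ := (e z).nonempty'
    exact ⟨y, z, hz, hy⟩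
  mem_of_le := by
    rintro a b hba ⟨z, hz, haz⟩
    exact ⟨z, hz, (e z).mem_of_le hba haz⟩
  sup_mem := by
    rintro a b ⟨z, hz, haz⟩ ⟨z', hz', hbz'⟩
    refine ⟨z ⊔ z', (e x).sup_mem hz hz', ?_⟩
    have h1 : (e z).carrier ⊆ (e (z ⊔ z')).carrier := le_def.mp (e.le_iff_le.mpr le_sup_left)
    have h2 : (e z').carrier ⊆ (e (z ⊔ z')).carrier := le_def.mp (e.le_iff_le.mpr le_sup_right)
    exact (e (z ⊔ z')).sup_mem (h1 haz) (h2 hbz')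

/-- `msup e x` is the least upper bound of the carrier of `e x`. -/
def msup (x : L) : L := e.symm (bigU e x)

theorem e_msup (x : L) : e (msup e x) = bigU e x := e.apply_symm_apply _

theorem le_msup {z x : L} (hz : z ∈ (e x).carrier) : z ≤ msup e x := by
  rw [← e.le_iff_le, e_msup]
  intro y hy
  exact ⟨z, hz, hy⟩

theorem le_phi_msup (x : L) : x ≤ phi e (msup e x) := by
  rw [← e.le_iff_le, e_phi]
  intro y hy
  exact le_msup e hy

theorem not_isPrinc_msup {x : L} (h : ¬ IsPrinc (e x)) : ¬ IsPrinc (e (msup e x)) := by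
  rw [e_msup]
  rintro ⟨c, hc⟩
  have hcU : c ∈ (bigU e x).carrier := by rw [hc]; exact le_refl c
  obtain ⟨z₀, hz₀, hcz₀⟩ := hcU
  have h1 : msup e x = phi e c := by rw [msup, hc]; rfl
  have h2 : msup e x ≤ z₀ := by rw [h1]; exact (mem_iff_phi_le e).mp hcz₀
  have h3 : z₀ ≤ msup e x := le_msup e hz₀
  have h4 : msup e x ∈ (e x).carrier := le_antisymm h3 h2 ▸ hz₀
  apply h
  refine ⟨msup e x, ideal_ext (Set.Subset.antisymm ?_ ?_)⟩
  · intro y hy; exact le_msup e hy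
  · intro y hy; exact (e x).mem_of_le hy h4

theorem ne_phi_msup {x : L} (h : ¬ IsPrinc (e x)) : x ≠ phi e (msup e x) := by
  intro heq
  refine h ⟨msup e x, ?_⟩
  conv_lhs => rw [heq]
  exact e_phi e (msup e x)

variable (M : LatticeIdeal L)

/-- Iterated `msup` starting from `e.symm M`. -/
def seqS : ℕ → L := fun n => (msup e)^[n] (e.symm M)

theorem seqS_succ (n : ℕ) : seqS e M (n + 1) = msup e (seqS e M n) :=
  Function.iterate_succ_apply' _ _ _

theorem e_seqS_zero : e (seqS e M 0) = M := e.apply_symm_apply M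

theorem seqS_le_phi (n : ℕ) : seqS e M n ≤ phi e (seqS e M (n + 1)) := by
  rw [seqS_succ]; exact le_phi_msup e _

theorem seqS_bound (n : ℕ) : seqS e M 0 ≤ (phi e)^[n + 1] (seqS e M (n + 1)) := by
  induction n with
  | zero => simpa using seqS_le_phi e M 0
  | succ n ih =>
      refine le_trans ih ?_
      have h2 := ((phi_strictMono e).monotone.iterate (n + 1)) (seqS_le_phi e M (n + 1))
      calc (phi e)^[n + 1] (seqS e M (n + 1))
          ≤ (phi e)^[n + 1] (phi e (seqS e M (n + 2))) := h2
        _ = (phi e)^[n + 2] (seqS e M (n + 2)) := (Function.iterate_succ_apply _ _ _).symm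

/-- The sequence of upper bounds of `M`. -/
def seqW : ℕ → L := fun n => (phi e)^[n] (seqS e M (n + 1))

theorem mem_M_le_seqW (n : ℕ) {z : L} (hz : z ∈ M.carrier) : z ≤ seqW e M n := by
  have hz' : z ∈ (e (seqS e M 0)).carrier := by rw [e_seqS_zero]; exact hz
  have h1 : phi e z ≤ seqS e M 0 := (mem_iff_phi_le e).mp hz'
  have h2 : phi e z ≤ (phi e)^[n + 1] (seqS e M (n + 1)) := le_trans h1 (seqS_bound e M n)
  have h3 : (phi e)^[n + 1] (seqS e M (n + 1)) = phi e (seqW e M n) :=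
    Function.iterate_succ_apply' _ _ _
  rw [h3] at h2
  exact (phi_le_phi_iff e).mp h2

theorem seqW_le_succ (n : ℕ) : seqW e M n ≤ seqW e M (n + 1) := by
  have h2 := ((phi_strictMono e).monotone.iterate n) (seqS_le_phi e M (n + 1))
  calc seqW e M n ≤ (phi e)^[n] (phi e (seqS e M (n + 2))) := h2
    _ = seqW e M (n + 1) := (Function.iterate_succ_apply _ _ _).symm

theorem seqW_mono : Monotone (seqW e M) := monotone_nat_of_le_succ (seqW_le_succ e M)

/-- The ideal generated by `M` together with all the `seqW` elements. -/
def bigJ : LatticeIdeal L where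
  carrier := M.carrier ∪ {y : L | ∃ n : ℕ, y ≤ seqW e M n}
  nonempty' := by
    obtain ⟨y, hy⟩ := M.nonempty'
    exact ⟨y, Or.inl hy⟩
  mem_of_le := by
    rintro a b hba (ha | ⟨n, hn⟩)
    · exact Or.inl (M.mem_of_le hba ha)
    · exact Or.inr ⟨n, le_trans hba hn⟩
  sup_mem := by
    rintro a b (ha | ⟨n, hn⟩) (hb | ⟨m, hm⟩)
    · exact Or.inl (M.sup_mem ha hb)
    · exact Or.inr ⟨m, sup_le (mem_M_le_seqW e M m ha) hm⟩
    · exact Or.inr ⟨n, sup_le hn (mem_M_le_seqW e M n hb)⟩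
    · exact Or.inr ⟨max n m, sup_le (le_trans hn (seqW_mono e M (le_max_left n m)))
        (le_trans hm (seqW_mono e M (le_max_right n m)))⟩

end

end HiggsAux

open HiggsAux in
/-- If a lattice is order-isomorphic to its ideal lattice, every ideal is principal. -/
theorem ideal_principal_of_orderIso_idealLattice {L : Type u} [Lattice L]
    (e : L ≃o LatticeIdeal L) :
    ∀ I : LatticeIdeal L, ∃ x : L, I.carrier = {y : L | y ≤ x} := by
  by_contra hcon
  push_neg at hcon
  obtain ⟨I₀, hI₀⟩ := hcon
  have hI₀np : I₀ ∈ {I : LatticeIdeal L | ¬ IsPrinc I} := by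
    rintro ⟨x, rfl⟩; exact hI₀ x rfl
  -- Zorn's lemma: a maximal non-principal ideal exists.
  have hchains : ∀ c ⊆ {I : LatticeIdeal L | ¬ IsPrinc I}, IsChain (· ≤ ·) c → ∀ y ∈ c,
      ∃ ub ∈ {I : LatticeIdeal L | ¬ IsPrinc I}, ∀ z ∈ c, z ≤ ub := by
    intro c hc hchain J₀ hJ₀
    refine ⟨⟨⋃ J ∈ c, J.carrier, ?_, ?_, ?_⟩, ?_, ?_⟩
    · obtain ⟨y, hy⟩ := J₀.nonempty'
      exact ⟨y, Set.mem_biUnion hJ₀ hy⟩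
    · rintro a b hba ha
      obtain ⟨J, hJ, haJ⟩ := Set.mem_iUnion₂.mp ha
      exact Set.mem_biUnion hJ (J.mem_of_le hba haJ)
    · rintro a b ha hb
      obtain ⟨J₁, hJ₁, haJ₁⟩ := Set.mem_iUnion₂.mp ha
      obtain ⟨J₂, hJ₂, hbJ₂⟩ := Set.mem_iUnion₂.mp hb
      rcases hchain.total hJ₁ hJ₂ with h | h
      · exact Set.mem_biUnion hJ₂ (J₂.sup_mem (h haJ₁) hbJ₂)
      · exact Set.mem_biUnion hJ₁ (J₁.sup_mem haJ₁ (h hbJ₂))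
    · rintro ⟨a, ha⟩
      have haU : a ∈ ⋃ J ∈ c, J.carrier := by
        have : a ∈ (princ a).carrier := le_refl a
        rw [← ha] at this
        exact this
      obtain ⟨J₁, hJ₁, haJ₁⟩ := Set.mem_iUnion₂.mp haU
      apply hc hJ₁
      refine ⟨a, ideal_ext (Set.Subset.antisymm ?_ ?_)⟩
      · intro z hz
        have hz2 : z ∈ ⋃ J ∈ c, J.carrier := Set.mem_biUnion hJ₁ hz
        have := congrArg LatticeIdeal.carrier ha
        rw [← this]
        exact hz2
      · intro z hz
        exact J₁.mem_of_le hz haJ₁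
    · intro J hJ
      exact le_def.mpr (fun z hz => Set.mem_biUnion hJ hz)
  obtain ⟨M, -, hM, hMmax⟩ :=
    zorn_le_nonempty₀ {I : LatticeIdeal L | ¬ IsPrinc I} hchains I₀ hI₀np
  -- main argument with the maximal non-principal ideal M
  · have hMnp : ¬ IsPrinc M := hM
    -- all iterates are non-principal
    have hnp : ∀ n : ℕ, ¬ IsPrinc (e (seqS e M n)) := by
      intro n
      induction n with
      | zero => rw [e_seqS_zero]; exact hMnp
      | succ n ih => rw [seqS_succ]; exact not_isPrinc_msup e ih
    have hlt : ∀ n : ℕ, seqS e M n < phi e (seqS e M (n + 1)) := by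
      intro n
      refine lt_of_le_of_ne (seqS_le_phi e M n) ?_
      rw [seqS_succ]
      exact ne_phi_msup e (hnp n)
    have hWlt : ∀ n : ℕ, seqW e M n < seqW e M (n + 1) := by
      intro n
      calc seqW e M n < (phi e)^[n] (phi e (seqS e M (n + 2))) :=
            ((phi_strictMono e).iterate n) (hlt (n + 1))
        _ = seqW e M (n + 1) := (Function.iterate_succ_apply _ _ _).symm
    -- s 1 cannot lie in M
    have hs1 : seqS e M 1 ∈ M.carrier → False := by
      intro hmem
      apply hMnp
      refine ⟨seqS e M 1, ideal_ext (Set.Subset.antisymm ?_ ?_)⟩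
      · intro z hz
        have hz' : z ∈ (e (seqS e M 0)).carrier := by rw [e_seqS_zero]; exact hz
        have h := le_msup e hz'
        rw [← seqS_succ] at h
        exact h
      · intro z hz
        exact M.mem_of_le hz hmem
    have hW0 : seqW e M 0 = seqS e M 1 := rfl
    -- bigJ strictly contains M, hence is principal
    have hMJ : M ≤ bigJ e M := fun z hz => Or.inl hz
    have hJp : IsPrinc (bigJ e M) := by
      by_contra hJnp
      have : bigJ e M ≤ M := hMmax hJnp hMJ
      have hmem : seqW e M 0 ∈ (bigJ e M).carrier := Or.inr ⟨0, le_refl _⟩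
      have : seqW e M 0 ∈ M.carrier := this hmem
      rw [hW0] at this
      exact hs1 this
    obtain ⟨cgen, hcgen⟩ := hJp
    have hcmem : cgen ∈ (bigJ e M).carrier := by
      have : cgen ∈ (princ cgen).carrier := le_refl cgen
      rw [← hcgen] at this
      exact this
    rcases hcmem with hcM | ⟨N, hcN⟩
    · -- the generator is in M : then seqW 0 ∈ M, contradiction
      have hmem : seqW e M 0 ∈ (bigJ e M).carrier := Or.inr ⟨0, le_refl _⟩
      rw [hcgen] at hmem
      have : seqW e M 0 ≤ cgen := hmem
      have : seqW e M 0 ∈ M.carrier := M.mem_of_le this hcM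
      rw [hW0] at this
      exact hs1 this
    · -- the generator is below some seqW N : contradicts strict monotonicity
      have hmem : seqW e M (N + 1) ∈ (bigJ e M).carrier := Or.inr ⟨N + 1, le_refl _⟩
      rw [hcgen] at hmem
      have h2 : seqW e M (N + 1) ≤ seqW e M N := le_trans hmem hcN
      exact absurd h2 (hWlt N).not_ge
end

section
/- In an upwards complete ordered set L, every noncompact element a lies below a maximal noncompact element: there exists m ≥ a such that m is not compact and every x > m is compact. -/
universe u

lemma chain_isDirectedSet {α : Type u} [PartialOrder α] {c : Set α}
    (hc : IsChain (· ≤ ·) c) (hne : c.Nonempty) : IsDirectedSet c := by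
  classical
  intro F hF
  induction F using Finset.induction_on with
  | empty => exact ⟨hne.choose, hne.choose_spec, by simp⟩
  | @insert x G hx ih =>
    have hxc : x ∈ c := hF (Finset.mem_insert_self x G)
    obtain ⟨z, hz, hzub⟩ := ih (fun y hy => hF (Finset.mem_insert_of_mem hy))
    rcases eq_or_ne x z with rfl | hne'
    · exact ⟨x, hz, fun y hy => by
        rcases Finset.mem_insert.1 hy with rfl | hy
        · exact le_refl _
        · exact hzub y hy⟩
    · rcases hc hxc hz hne' with h | h
      · exact ⟨z, hz, fun y hy => by
          rcases Finset.mem_insert.1 hy with rfl | hy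
          · exact h
          · exact hzub y hy⟩
      · exact ⟨x, hxc, fun y hy => by
          rcases Finset.mem_insert.1 hy with rfl | hy
          · exact le_refl _
          · exact (hzub y hy).trans h⟩

/-- In an upwards complete ordered set, every noncompact element lies below a
maximal noncompact element. -/
theorem exists_maximal_noncompact_above {α : Type u} [PartialOrder α]
    (hL : UpwardsComplete α) (a : α) (ha : ¬ IsCompactElem a) :
    ∃ m : α, a ≤ m ∧ ¬ IsCompactElem m ∧ ∀ x : α, m < x → IsCompactElem x := by
  obtain ⟨m, ham, hm⟩ := zorn_le_nonempty₀
    {x : α | a ≤ x ∧ ¬ IsCompactElem x}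
    (fun c hcs hc y hy => by
      have hne : c.Nonempty := ⟨y, hy⟩
      have hdir := chain_isDirectedSet hc hne
      obtain ⟨s, hs⟩ := hL c hdir
      refine ⟨s, ⟨(hcs hy).1.trans (hs.1 hy), ?_⟩, fun z hz => hs.1 hz⟩
      intro hscomp
      obtain ⟨x, hxc, hsx⟩ := hscomp c hdir s hs le_rfl
      have hxe : x = s := le_antisymm (hs.1 hxc) hsx
      exact (hcs hxc).2 (hxe ▸ hscomp))
    a ⟨le_refl a, ha⟩
  exact ⟨m, hm.1.1, hm.1.2, fun x hx => by
    by_contra hxc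
    exact absurd (hm.2 ⟨hm.1.1.trans hx.le, hxc⟩ hx.le) (not_le_of_gt hx)⟩
end

section
/- Let L be an upwards complete ordered set and let m ∈ L be a maximal noncompact element (m is not compact and every x > m is compact). Then the up-set [m) = { x ∈ L : x ≥ m } satisfies the ascending chain condition: there is no strictly increasing sequence m ≤ x₀ < x₁ < x₂ < … in L. -/
universe u

/-- In an upwards complete ordered set, the up-set of a maximal noncompact element
satisfies the ascending chain condition. -/
theorem upSet_of_maximal_noncompact_acc {α : Type u} [PartialOrder α]
    (hL : UpwardsComplete α) (m : α) (hm : ¬ IsCompactElem m)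
    (hmax : ∀ x : α, m < x → IsCompactElem x) :
    ¬ ∃ x : ℕ → α, m ≤ x 0 ∧ ∀ n : ℕ, x n < x (n + 1) := by
  rintro ⟨x, hx0, hxs⟩
  have hmono : StrictMono x := strictMono_nat_of_lt_succ hxs
  have hdir : IsDirectedSet (Set.range x) := by
    intro F hF
    have hsel : ∀ a : F, ∃ k, x k = (a : α) := fun a => hF a.2
    choose g hg using hsel
    refine ⟨x (F.attach.sup g), ⟨_, rfl⟩, fun a ha => ?_⟩
    have := hmono.monotone (Finset.le_sup (f := g) (Finset.mem_attach F ⟨a, ha⟩))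
    rwa [hg ⟨a, ha⟩] at this
  obtain ⟨s, hs⟩ := hL _ hdir
  have hms : m < s := lt_of_le_of_lt (le_trans hx0 (le_of_lt (hxs 0)))
    (lt_of_lt_of_le (lt_irrefl (x 1) |> fun _ => (hxs 1)) (hs.1 ⟨2, rfl⟩))
  have hcs : IsCompactElem s := hmax s hms
  obtain ⟨a, ⟨n, rfl⟩, hsa⟩ := hcs _ hdir s hs le_rfl
  exact absurd (lt_of_lt_of_le (hxs n) (le_trans (hs.1 ⟨n+1, rfl⟩) hsa)) (lt_irrefl _)
end

section
/- If a lattice L is isomorphic (as an ordered set) to its ideal lattice Idl(L), then L is iteratively algebraic: Kⁿ(L) is algebraic for every natural number n. -/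
universe u

section Transfer

variable {α β : Type u} [PartialOrder α] [PartialOrder β]

lemma IsDirectedSet.image (f : α ≃o β) {X : Set α} (h : IsDirectedSet X) :
    IsDirectedSet (f '' X) := by
  classical
  intro F hF
  obtain ⟨z, hz, hzb⟩ := h (F.image f.symm) (by
    intro x hx
    simp only [Finset.coe_image, Set.mem_image] at hx
    obtain ⟨y, hy, rfl⟩ := hx
    obtain ⟨a, ha, rfl⟩ := hF hy
    simpa using ha)
  refine ⟨f z, ⟨z, hz, rfl⟩, fun x hx => ?_⟩
  have : f.symm x ≤ z := hzb _ (Finset.mem_image_of_mem _ hx)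
  have := f.monotone this
  simpa using this

lemma IsCompactElem.map (f : α ≃o β) {x : α} (h : IsCompactElem x) :
    IsCompactElem (f x) := by
  intro Y hY s hs hle
  have hX : IsDirectedSet (f.symm '' Y) := hY.image f.symm
  have hlub : IsLUB (f.symm '' Y) (f.symm s) := f.symm.isLUB_image'.mpr hs
  have hx : x ≤ f.symm s := by
    have := f.symm.monotone hle; simpa using this
  obtain ⟨y, ⟨b, hb, rfl⟩, hxy⟩ := h _ hX _ hlub hx
  refine ⟨b, hb, ?_⟩
  have := f.monotone hxy
  simpa using this

lemma IsCompactElem.of_map (f : α ≃o β) {x : α} (h : IsCompactElem (f x)) :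
    IsCompactElem x := by
  have := h.map f.symm
  simpa using this

lemma IsAlgebraicOrder.map (f : α ≃o β) (h : IsAlgebraicOrder α) :
    IsAlgebraicOrder β := by
  obtain ⟨huc, halg⟩ := h
  constructor
  · intro Y hY
    obtain ⟨s, hs⟩ := huc (f.symm '' Y) (hY.image f.symm)
    refine ⟨f s, ?_⟩
    have := f.isLUB_image'.mpr hs
    rwa [Set.image_image, Set.image_congr' (fun y => f.apply_symm_apply y),
      Set.image_id'] at this
  · intro y
    have hset : {k : β | IsCompactElem k ∧ k ≤ y}
        = f '' {k : α | IsCompactElem k ∧ k ≤ f.symm y} := by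
      ext k
      simp only [Set.mem_setOf_eq, Set.mem_image]
      constructor
      · rintro ⟨hk, hky⟩
        refine ⟨f.symm k, ⟨?_, ?_⟩, by simp⟩
        · have : IsCompactElem (f (f.symm k)) := by simpa using hk
          exact this.of_map f
        · have := f.symm.monotone hky; simpa using this
      · rintro ⟨a, ⟨ha, hay⟩, rfl⟩
        refine ⟨ha.map f, ?_⟩
        have := f.monotone hay; simpa using this
    obtain ⟨hd, hl⟩ := halg (f.symm y)
    rw [hset]
    refine ⟨hd.image f, ?_⟩
    have := f.isLUB_image'.mpr hl
    simpa using this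

/-- An order iso restricts to compact elements. -/
def OrderIso.compactRestrict (f : α ≃o β) :
    {x : α // IsCompactElem x} ≃o {y : β // IsCompactElem y} where
  toFun x := ⟨f x.1, x.2.map f⟩
  invFun y := ⟨f.symm y.1, y.2.map f.symm⟩
  left_inv x := by simp
  right_inv y := by simp
  map_rel_iff' := by intro x y; exact f.le_iff_le

end Transfer

section Ideals

variable {L : Type u} [Lattice L]

/-- The principal ideal generated by an element. -/
def principalIdeal (a : L) : LatticeIdeal L where
  carrier := {x | x ≤ a}
  nonempty' := ⟨a, le_refl a⟩
  mem_of_le := fun _ _ h hx => le_trans h hx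
  sup_mem := fun _ _ hx hy => sup_le hx hy

lemma principal_le_iff {a : L} {I : LatticeIdeal L} :
    principalIdeal a ≤ I ↔ a ∈ I.carrier := by
  constructor
  · intro h; exact h (le_refl a : a ∈ (principalIdeal a).carrier)
  · intro h x hx; exact I.mem_of_le hx h

lemma principal_le_principal_iff {a b : L} :
    principalIdeal a ≤ principalIdeal b ↔ a ≤ b := principal_le_iff

/-- The union of a directed set of ideals, as an ideal. -/
noncomputable def dirUnion (X : Set (LatticeIdeal L)) (hX : IsDirectedSet X) :
    LatticeIdeal L where
  carrier := ⋃ I ∈ X, I.carrier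
  nonempty' := by
    obtain ⟨I, hI, -⟩ := hX ∅ (by simp)
    obtain ⟨a, ha⟩ := I.nonempty'
    exact ⟨a, Set.mem_biUnion hI ha⟩
  mem_of_le := by
    rintro x y hyx hx
    obtain ⟨I, hI, hxI⟩ := Set.mem_iUnion₂.mp hx
    exact Set.mem_biUnion hI (I.mem_of_le hyx hxI)
  sup_mem := by
    classical
    rintro x y hx hy
    obtain ⟨I, hI, hxI⟩ := Set.mem_iUnion₂.mp hx
    obtain ⟨J, hJ, hyJ⟩ := Set.mem_iUnion₂.mp hy
    obtain ⟨K, hK, hKb⟩ := hX {I, J} (by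
      intro z hz
      simp only [Finset.coe_insert, Finset.coe_singleton, Set.mem_insert_iff,
        Set.mem_singleton_iff] at hz
      rcases hz with rfl | rfl <;> assumption)
    have hIK : I ≤ K := hKb I (by simp)
    have hJK : J ≤ K := hKb J (by simp)
    exact Set.mem_biUnion hK (K.sup_mem (hIK hxI) (hJK hyJ))

lemma dirUnion_isLUB (X : Set (LatticeIdeal L)) (hX : IsDirectedSet X) :
    IsLUB X (dirUnion X hX) := by
  constructor
  · intro I hI x hx
    exact Set.mem_biUnion hI hx
  · intro J hJ x hx
    obtain ⟨I, hI, hxI⟩ := Set.mem_iUnion₂.mp hx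
    exact hJ hI hxI

lemma upwardsComplete_ideal : UpwardsComplete (LatticeIdeal L) :=
  fun X hX => ⟨dirUnion X hX, dirUnion_isLUB X hX⟩

lemma principal_compact (a : L) : IsCompactElem (principalIdeal a) := by
  intro X hX s hs hle
  have hs' : s = dirUnion X hX := hs.unique (dirUnion_isLUB X hX)
  have : a ∈ s.carrier := hle (le_refl a : a ∈ (principalIdeal a).carrier)
  rw [hs'] at this
  obtain ⟨I, hI, haI⟩ := Set.mem_iUnion₂.mp this
  exact ⟨I, hI, principal_le_iff.mpr haI⟩

/-- The set of principal ideals below `I`. -/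
def principalsBelow (I : LatticeIdeal L) : Set (LatticeIdeal L) :=
  {K | ∃ b ∈ I.carrier, K = principalIdeal b}

lemma principalsBelow_directed (I : LatticeIdeal L) :
    IsDirectedSet (principalsBelow I) := by
  classical
  intro F hF
  have : ∀ G : Finset (LatticeIdeal L), ↑G ⊆ principalsBelow I →
      ∃ b ∈ I.carrier, ∀ K ∈ G, K ≤ principalIdeal b := by
    intro G
    induction G using Finset.induction_on with
    | empty =>
      intro _
      obtain ⟨b, hb⟩ := I.nonempty'
      exact ⟨b, hb, by simp⟩
    | insert _ _ hK ih =>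
      rename_i K G'
      intro hG
      obtain ⟨b, hb, hall⟩ := ih (fun x hx => hG (by simp [hx]))
      obtain ⟨c, hc, rfl⟩ := hG (Finset.mem_insert_self K G')
      refine ⟨c ⊔ b, I.sup_mem hc hb, ?_⟩
      intro K' hK'
      rcases Finset.mem_insert.mp hK' with rfl | hK''
      · exact principal_le_principal_iff.mpr le_sup_left
      · exact le_trans (hall K' hK'') (principal_le_principal_iff.mpr le_sup_right)
  obtain ⟨b, hb, hall⟩ := this F hF
  exact ⟨principalIdeal b, ⟨b, hb, rfl⟩, hall⟩

lemma principalsBelow_isLUB (I : LatticeIdeal L) :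
    IsLUB (principalsBelow I) I := by
  constructor
  · rintro K ⟨b, hb, rfl⟩
    exact principal_le_iff.mpr hb
  · intro J hJ x hx
    have : principalIdeal x ≤ J := hJ ⟨x, hx, rfl⟩
    exact this (le_refl x : x ∈ (principalIdeal x).carrier)

/-- Every compact ideal is principal. -/
lemma compact_ideal_principal {I : LatticeIdeal L} (h : IsCompactElem I) :
    ∃ a, I = principalIdeal a := by
  obtain ⟨K, ⟨b, hb, rfl⟩, hIK⟩ :=
    h (principalsBelow I) (principalsBelow_directed I) I (principalsBelow_isLUB I) le_rfl
  exact ⟨b, le_antisymm hIK (principal_le_iff.mpr hb)⟩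

lemma directed_compactsBelow (I : LatticeIdeal L) :
    IsDirectedSet {K : LatticeIdeal L | IsCompactElem K ∧ K ≤ I} := by
  classical
  intro F hF
  have : ∀ G : Finset (LatticeIdeal L),
      ↑G ⊆ {K : LatticeIdeal L | IsCompactElem K ∧ K ≤ I} →
      ∃ b ∈ I.carrier, ∀ K ∈ G, K ≤ principalIdeal b := by
    intro G
    induction G using Finset.induction_on with
    | empty =>
      intro _
      obtain ⟨b, hb⟩ := I.nonempty'
      exact ⟨b, hb, by simp⟩
    | insert _ _ hK ih =>
      rename_i K G'
      intro hG
      obtain ⟨b, hb, hall⟩ := ih (fun x hx => hG (by simp [hx]))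
      have hKmem : IsCompactElem K ∧ K ≤ I := hG (Finset.mem_insert_self K G')
      obtain ⟨K', ⟨c, hc, rfl⟩, hKc⟩ := hKmem.1 (principalsBelow I)
        (principalsBelow_directed I) I (principalsBelow_isLUB I) hKmem.2
      refine ⟨c ⊔ b, I.sup_mem hc hb, ?_⟩
      intro K'' hK''
      rcases Finset.mem_insert.mp hK'' with rfl | hK3
      · exact le_trans hKc (principal_le_principal_iff.mpr le_sup_left)
      · exact le_trans (hall K'' hK3) (principal_le_principal_iff.mpr le_sup_right)
  obtain ⟨b, hb, hall⟩ := this F hF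
  exact ⟨principalIdeal b, ⟨principal_compact b, principal_le_iff.mpr hb⟩, hall⟩

lemma isLUB_compactsBelow (I : LatticeIdeal L) :
    IsLUB {K : LatticeIdeal L | IsCompactElem K ∧ K ≤ I} I := by
  constructor
  · rintro K ⟨-, hK⟩; exact hK
  · intro J hJ x hx
    have : principalIdeal x ≤ J :=
      hJ ⟨principal_compact x, principal_le_iff.mpr hx⟩
    exact this (le_refl x : x ∈ (principalIdeal x).carrier)

lemma algebraic_ideal : IsAlgebraicOrder (LatticeIdeal L) :=
  ⟨upwardsComplete_ideal, fun I => ⟨directed_compactsBelow I, isLUB_compactsBelow I⟩⟩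

end Ideals

/-- If `L ≅ Idl L`, then `L` is order-isomorphic to its own poset of compact
elements. -/
lemma nonempty_compactIso {L : Type u} [Lattice L] (e : L ≃o LatticeIdeal L) :
    Nonempty (L ≃o {x : L // IsCompactElem x}) := by
  classical
  let f : L → {x : L // IsCompactElem x} :=
    fun a => ⟨e.symm (principalIdeal a), (principal_compact a).map e.symm⟩
  have hf : ∀ a b : L, f a ≤ f b ↔ a ≤ b := by
    intro a b
    show e.symm (principalIdeal a) ≤ e.symm (principalIdeal b) ↔ a ≤ b
    rw [e.symm.le_iff_le]
    exact principal_le_principal_iff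
  have hinj : Function.Injective f := by
    intro a b hab
    exact le_antisymm ((hf a b).mp hab.le) ((hf b a).mp hab.ge)
  have hsurj : Function.Surjective f := by
    rintro ⟨v, hv⟩
    have hev : IsCompactElem (e v) := hv.map e
    obtain ⟨a, ha⟩ := compact_ideal_principal hev
    refine ⟨a, ?_⟩
    apply Subtype.ext
    show e.symm (principalIdeal a) = v
    rw [← ha]
    simp
  exact ⟨⟨Equiv.ofBijective f ⟨hinj, hsurj⟩, hf _ _⟩⟩

/-- If a lattice is order-isomorphic to its ideal lattice, it is iteratively algebraic. -/
theorem iterativelyAlgebraic_of_orderIso_idealLattice {L : Type u} [Lattice L]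
    (e : L ≃o LatticeIdeal L) :
    IterativelyAlgebraic L inferInstance := by
  have halgL : IsAlgebraicOrder L := algebraic_ideal.map e.symm
  obtain ⟨g⟩ := nonempty_compactIso e
  have key : ∀ n : ℕ, Nonempty (@OrderIso L (KIter L (inferInstance : PartialOrder L) n).1 _
      (@Preorder.toLE _ (@PartialOrder.toPreorder _
        (KIter L (inferInstance : PartialOrder L) n).2))) := by
    intro n
    induction n with
    | zero => exact ⟨OrderIso.refl L⟩
    | succ n ih =>
      letI : PartialOrder (KIter L (inferInstance : PartialOrder L) n).1 :=
        (KIter L (inferInstance : PartialOrder L) n).2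
      obtain ⟨f⟩ := ih
      have h2 : L ≃o {x : (KIter L (inferInstance : PartialOrder L) n).1 // IsCompactElem x} :=
        g.trans f.compactRestrict
      exact ⟨h2⟩
  intro n
  letI : PartialOrder (KIter L (inferInstance : PartialOrder L) n).1 :=
    (KIter L (inferInstance : PartialOrder L) n).2
  obtain ⟨f⟩ := key n
  exact halgL.map f
end
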